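/- Let $x_0\in\mathbb{R}^N$, $\lambda>0$, $0<r<R_0$, and let $u\in H^1_0(B_{R_0}(x_0))\cap H^2(B_{R_0}(x_0))$ satisfy (with $N_{\lambda,R_0}$ the Gaussian-weighted frequency at the ball $B_{R_0}(x_0)$) the bound $\frac{16\lambda}{r^2}\big(\frac{N}{4}+\lambda N_{\lambda,R_0}\big)\le \mu$ for some $\mu\in(0,1)$, where $N_{\lambda,R_0}=\frac{\int_{B_{R_0}}|\nabla u|^2 e^{-|x-x_0|^2/(4\lambda)}dx}{\int_{B_{R_0}}u^2 e^{-|x-x_0|^2/(4\lambda)}dx}$. Then $(1-\mu)\int_{B_{R_0}(x_0)}u^2\,e^{-|x-x_0|^2/(4\lambda)}\,dx \le \int_{B_r(x_0)}u^2\,e^{-|x-x_0|^2/(4\lambda)}\,dx$. -/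

import Mathlib

open MeasureTheory Real Set

noncomputable def lap {N : ℕ} (f : EuclideanSpace ℝ (Fin N) → ℝ)
    (x : EuclideanSpace ℝ (Fin N)) : ℝ :=
  ∑ i : Fin N, fderiv ℝ (fun y => fderiv ℝ f y (EuclideanSpace.single i 1)) x
    (EuclideanSpace.single i 1)

/-- `φ` solves `∂ₜφ - Δφ + aφ = 0` on `ℝ^N × (0,T)` (pointwise formulation). -/
def IsHeatSol {N : ℕ} (T : ℝ) (a φ : ℝ → EuclideanSpace ℝ (Fin N) → ℝ) : Prop :=
  ∀ (x : EuclideanSpace ℝ (Fin N)), ∀ t ∈ Set.Ioo (0:ℝ) T,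
    HasDerivAt (fun s => φ s x) (lap (φ t) x - a t x * φ t x) t

/-- The smallest cube centered at `x₀` containing the closed ball of radius `r`. -/
def cube {N : ℕ} (x₀ : EuclideanSpace ℝ (Fin N)) (r : ℝ) :
    Set (EuclideanSpace ℝ (Fin N)) := {y | ∀ i, |y i - x₀ i| ≤ r}

/-- Backward Gaussian kernel `G_λ`. -/
noncomputable def Gker (N : ℕ) (T lam : ℝ) (x₀ : EuclideanSpace ℝ (Fin N))
    (t : ℝ) (x : EuclideanSpace ℝ (Fin N)) : ℝ :=
  (T - t + lam) ^ (-(N:ℝ)/2) * Real.exp (-‖x - x₀‖^2 / (4*(T - t + lam)))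

lemma euclid_normsq {n : ℕ} (x : EuclideanSpace ℝ (Fin n)) :
    ‖x‖ ^ 2 = ∑ i, (x i) ^ 2 := by
  rw [EuclideanSpace.norm_eq, Real.sq_sqrt (by positivity)]
  simp [Real.norm_eq_abs, sq_abs]

lemma divergence_ball_zero {n : ℕ} (R : ℝ) (hR : 0 < R)
    (F : EuclideanSpace ℝ (Fin (n+1)) → ℝ) (hF : ContDiff ℝ 1 F)
    (h0 : ∀ x : EuclideanSpace ℝ (Fin (n+1)), ‖x‖ = R → F x = 0) (i : Fin (n+1)) :
    ∫ x in Metric.closedBall (0 : EuclideanSpace ℝ (Fin (n+1))) R,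
      fderiv ℝ F x (EuclideanSpace.single i 1) = 0 := by
  set φ : EuclideanSpace ℝ (Fin (n+1)) → ℝ :=
    fun x => fderiv ℝ F x (EuclideanSpace.single i 1) with hφ
  have hφc : Continuous φ := (hF.continuous_fderiv one_ne_zero).clm_apply continuous_const
  set h : EuclideanSpace ℝ (Fin (n+1)) → ℝ :=
    Set.indicator (Metric.closedBall 0 R) φ with hh
  have hInt : Integrable h := by
    rw [hh, integrable_indicator_iff measurableSet_closedBall]
    exact hφc.continuousOn.integrableOn_compact (isCompact_closedBall _ _)
  -- combined equivalence  ℝ × (Fin n → ℝ) ≃ᵐ EuclideanSpace ℝ (Fin (n+1))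
  set ePE := ((MeasurableEquiv.piFinSuccAbove (fun _ : Fin (n+1) => ℝ) i).symm.trans
      (MeasurableEquiv.toLp 2 (Fin (n+1) → ℝ))) with hePE
  have mePE : MeasurePreserving ePE
      ((volume : Measure ℝ).prod (Measure.pi fun _ : Fin n => (volume : Measure ℝ)))
      volume := by
    refine MeasurePreserving.comp (μb := (volume : Measure (Fin (n+1) → ℝ)))
      (f := (MeasurableEquiv.piFinSuccAbove (fun _ : Fin (n+1) => ℝ) i).symm)
      (g := (MeasurableEquiv.toLp 2 (Fin (n+1) → ℝ))) ?_ ?_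
    · exact (EuclideanSpace.volume_preserving_symm_measurableEquiv_toLp (Fin (n+1))).symm
    · have := (measurePreserving_piFinSuccAbove (fun _ : Fin (n+1) => (volume : Measure ℝ)) i).symm
      rwa [← volume_pi] at this
  have step1 : ∫ x in Metric.closedBall (0 : EuclideanSpace ℝ (Fin (n+1))) R, φ x
      = ∫ z, h (ePE z)
        ∂((volume : Measure ℝ).prod (Measure.pi fun _ : Fin n => (volume : Measure ℝ))) := by
    rw [← integral_indicator measurableSet_closedBall, ← hh,
      mePE.integral_comp ePE.measurableEmbedding h]
  have hInt' : Integrable (fun z => h (ePE z))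
      ((volume : Measure ℝ).prod (Measure.pi fun _ : Fin n => (volume : Measure ℝ))) :=
    (mePE.integrable_comp_emb ePE.measurableEmbedding).mpr hInt
  rw [step1, integral_prod_symm _ hInt']
  -- the line through (0, w) in direction i
  set v : EuclideanSpace ℝ (Fin (n+1)) := EuclideanSpace.single i (1:ℝ) with hv
  set c : (Fin n → ℝ) → EuclideanSpace ℝ (Fin (n+1)) :=
    fun w => (MeasurableEquiv.toLp 2 (Fin (n+1) → ℝ)) (i.insertNth 0 w) with hc
  have hXw : ∀ (t : ℝ) (w : Fin n → ℝ), ePE (t, w) = c w + t • v := by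
    intro t w
    have h1 : ePE (t, w) = (WithLp.equiv 2 (Fin (n+1) → ℝ)).symm (i.insertNth t w) := rfl
    have h2 : c w = (WithLp.equiv 2 (Fin (n+1) → ℝ)).symm (i.insertNth 0 w) := rfl
    rw [h1, h2]
    ext j
    rw [PiLp.add_apply, PiLp.smul_apply]
    simp only [WithLp.equiv_symm_apply, PiLp.toLp_apply]
    refine Fin.succAboveCases i ?_ (fun k => ?_) j
    · simp [EuclideanSpace.single_apply, hv]
    · simp [EuclideanSpace.single_apply, Fin.succAbove_ne i k, hv]
  have hnorm : ∀ (t : ℝ) (w : Fin n → ℝ), ‖c w + t • v‖^2 = t^2 + ∑ j, (w j)^2 := by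
    intro t w
    rw [euclid_normsq, Fin.sum_univ_succAbove (fun j => ((c w + t • v) j)^2) i]
    have hXt : c w + t • v = (WithLp.equiv 2 (Fin (n+1) → ℝ)).symm (i.insertNth t w) := by
      rw [← hXw]; rfl
    rw [hXt]
    simp [WithLp.equiv_symm_apply]
  have hinner : ∀ w : Fin n → ℝ, ∫ t : ℝ, h (ePE (t, w)) = 0 := by
    intro w
    set s := ∑ j, (w j)^2 with hs
    have hs0 : 0 ≤ s := by positivity
    have hmem : ∀ t : ℝ, (c w + t • v ∈ Metric.closedBall (0:EuclideanSpace ℝ (Fin (n+1))) R)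
        ↔ t^2 ≤ R^2 - s := by
      intro t
      rw [Metric.mem_closedBall, dist_zero_right]
      constructor
      · intro hle
        have := pow_le_pow_left₀ (norm_nonneg _) hle 2
        rw [hnorm t w] at this; linarith
      · intro hle
        have h2 : ‖c w + t • v‖^2 ≤ R^2 := by rw [hnorm t w]; linarith
        nlinarith [norm_nonneg (c w + t • v), hR]
    by_cases hcase : R^2 - s < 0
    · have hz : ∀ t : ℝ, h (ePE (t, w)) = 0 := by
        intro t
        rw [hXw, hh, Set.indicator_of_notMem]
        rw [hmem]; push_neg; nlinarith [sq_nonneg t]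
      simp [hz]
    push_neg at hcase
    set b := Real.sqrt (R^2 - s) with hb
    have hb0 : 0 ≤ b := Real.sqrt_nonneg _
    have hb2 : b^2 = R^2 - s := Real.sq_sqrt hcase
    have hind : (fun t => h (ePE (t, w))) = Set.indicator (Icc (-b) b)
        (fun t => φ (c w + t • v)) := by
      funext t
      have hiff : t ∈ Icc (-b) b ↔ t^2 ≤ R^2 - s := by
        rw [mem_Icc, ← abs_le]
        constructor
        · intro habs; nlinarith [sq_abs t, abs_nonneg t]
        · intro hsq; nlinarith [sq_abs t, abs_nonneg t]
      by_cases hmemt : t^2 ≤ R^2 - s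
      · rw [Set.indicator_of_mem (hiff.mpr hmemt), hh, hXw,
          Set.indicator_of_mem ((hmem t).mpr hmemt)]
      · rw [Set.indicator_of_notMem (fun hc => hmemt (hiff.mp hc)), hh, hXw,
          Set.indicator_of_notMem (fun hc => hmemt ((hmem t).mp hc))]
    rw [hind, integral_indicator measurableSet_Icc,
      integral_Icc_eq_integral_Ioc, ← intervalIntegral.integral_of_le (by linarith : -b ≤ b)]
    have hg : ∀ t ∈ Set.uIcc (-b) b, HasDerivAt (fun t => F (c w + t • v)) (φ (c w + t • v)) t := by
      intro t _
      have hline : HasDerivAt (fun t : ℝ => c w + t • v) v t := by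
        simpa using ((hasDerivAt_id t).smul_const v).const_add (c w)
      exact ((hF.differentiable one_ne_zero) (c w + t • v)).hasFDerivAt.comp_hasDerivAt t hline
    have hcont : IntervalIntegrable (fun t => φ (c w + t • v)) volume (-b) b := by
      apply Continuous.intervalIntegrable
      exact hφc.comp (continuous_const.add (continuous_id.smul continuous_const))
    rw [intervalIntegral.integral_eq_sub_of_hasDerivAt hg hcont]
    have hnR : ∀ t : ℝ, t^2 = R^2 - s → F (c w + t • v) = 0 := by
      intro t ht
      apply h0
      have h2 : ‖c w + t • v‖^2 = R^2 := by rw [hnorm]; linarith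
      rw [← Real.sqrt_sq (norm_nonneg (c w + t • v)), h2, Real.sqrt_sq hR.le]
    rw [hnR b hb2, hnR (-b) (by rw [neg_pow]; simpa using hb2), sub_zero]
  simp [hinner]

lemma translate_ball {n : ℕ} (x₀ : EuclideanSpace ℝ (Fin n)) (R : ℝ)
    (f : EuclideanSpace ℝ (Fin n) → ℝ) :
    ∫ x in Metric.closedBall x₀ R, f x
      = ∫ x in Metric.closedBall (0 : EuclideanSpace ℝ (Fin n)) R, f (x₀ + x) := by
  have hmem : ∀ x : EuclideanSpace ℝ (Fin n),
      (x₀ + x ∈ Metric.closedBall x₀ R) ↔ (x ∈ Metric.closedBall (0:EuclideanSpace ℝ (Fin n)) R) := by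
    intro x
    simp [Metric.mem_closedBall, dist_eq_norm, add_sub_cancel_left]
  rw [← integral_indicator measurableSet_closedBall, ← integral_indicator measurableSet_closedBall]
  rw [← integral_add_left_eq_self (Set.indicator (Metric.closedBall x₀ R) f) x₀]
  congr 1
  funext x
  by_cases hx : x ∈ Metric.closedBall (0 : EuclideanSpace ℝ (Fin n)) R
  · rw [Set.indicator_of_mem hx, Set.indicator_of_mem ((hmem x).mpr hx)]
  · rw [Set.indicator_of_notMem hx, Set.indicator_of_notMem (fun hc => hx ((hmem x).mp hc))]

lemma pointwise_sum {n : ℕ} (lam : ℝ) (hlam : 0 < lam)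
    (u : EuclideanSpace ℝ (Fin (n+1)) → ℝ) (hreg : ContDiff ℝ 2 u)
    (x : EuclideanSpace ℝ (Fin (n+1))) :
    ∑ i : Fin (n+1), fderiv ℝ
        (fun y => y i * ((u y)^2 * Real.exp (-‖y‖^2/(4*lam)))) x (EuclideanSpace.single i 1)
    = ((n+1 : ℝ) - ‖x‖^2/(2*lam)) * ((u x)^2 * Real.exp (-‖x‖^2/(4*lam)))
      + 2 * u x * (fderiv ℝ u x x) * Real.exp (-‖x‖^2/(4*lam)) := by
  have hu : HasFDerivAt u (fderiv ℝ u x) x :=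
    ((hreg.differentiable two_ne_zero) x).hasFDerivAt
  have hq : HasFDerivAt (fun y : EuclideanSpace ℝ (Fin (n+1)) => -‖y‖^2/(4*lam))
      ((-(4*lam)⁻¹) • (2 • innerSL ℝ x)) x := by
    have h1 : HasFDerivAt (fun y : EuclideanSpace ℝ (Fin (n+1)) => ‖y‖^2) (2 • innerSL ℝ x) x :=
      (hasStrictFDerivAt_norm_sq x).hasFDerivAt
    have heq : (fun y : EuclideanSpace ℝ (Fin (n+1)) => -‖y‖^2/(4*lam)) = fun y => (-(4*lam)⁻¹) * ‖y‖^2 := by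
      funext y; ring
    rw [heq]
    exact h1.const_mul _
  have hee : HasFDerivAt (fun y : EuclideanSpace ℝ (Fin (n+1)) => Real.exp (-‖y‖^2/(4*lam)))
      (Real.exp (-‖x‖^2/(4*lam)) • ((-(4*lam)⁻¹) • (2 • innerSL ℝ x))) x :=
    (Real.hasDerivAt_exp _).comp_hasFDerivAt x hq
  have hu2 : HasFDerivAt (fun y => (u y)^2) ((2 * u x) • fderiv ℝ u x) x := by
    have h1 : HasFDerivAt (fun y => u y * u y) (u x • fderiv ℝ u x + u x • fderiv ℝ u x) x := hu.mul hu
    have heq : (fun y => (u y)^2) = fun y => u y * u y := by funext y; ring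
    rw [heq]
    convert h1 using 1
    ext y
    simp [two_mul]
    ring
  have hg := hu2.mul hee
  have hproj : ∀ i : Fin (n+1), HasFDerivAt (fun y : EuclideanSpace ℝ (Fin (n+1)) => y i)
      (EuclideanSpace.proj (𝕜 := ℝ) i) x := by
    intro i
    exact (EuclideanSpace.proj (𝕜 := ℝ) i).hasFDerivAt
  have hFi := fun i : Fin (n+1) => (hproj i).mul hg
  have hcalc : ∀ i : Fin (n+1),
      fderiv ℝ (fun y => y i * ((u y)^2 * Real.exp (-‖y‖^2/(4*lam)))) x (EuclideanSpace.single i 1)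
      = (u x)^2 * Real.exp (-‖x‖^2/(4*lam))
        + ((-(4*lam)⁻¹*2) * ((u x)^2 * Real.exp (-‖x‖^2/(4*lam)))) * (x i * x i)
        + (2 * u x * Real.exp (-‖x‖^2/(4*lam)))
            * (x i * fderiv ℝ u x (EuclideanSpace.single i 1)) := by
    intro i
    rw [(show HasFDerivAt (fun y : EuclideanSpace ℝ (Fin (n+1)) => y i * ((u y)^2 * Real.exp (-‖y‖^2/(4*lam)))) _ x from hFi i).fderiv]
    simp [ContinuousLinearMap.add_apply, ContinuousLinearMap.smul_apply,
      innerSL_apply_apply, EuclideanSpace.inner_single_right, real_inner_comm,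
      PiLp.proj_apply]
    ring
  rw [Finset.sum_congr rfl (fun i _ => hcalc i)]
  rw [Finset.sum_add_distrib, Finset.sum_add_distrib]
  rw [Finset.sum_const, ← Finset.mul_sum, ← Finset.mul_sum]
  have hxx : ∑ i : Fin (n+1), x i * x i = ‖x‖^2 := by
    rw [euclid_normsq]
    exact Finset.sum_congr rfl fun i _ => (pow_two (x i)).symm
  have hdu : ∑ i : Fin (n+1), x i * fderiv ℝ u x (EuclideanSpace.single i 1)
      = fderiv ℝ u x x := by
    have hx : x = ∑ i : Fin (n+1), x i • EuclideanSpace.single i (1:ℝ) := by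
      have h := (EuclideanSpace.basisFun (Fin (n+1)) ℝ).sum_repr x
      simp only [EuclideanSpace.basisFun_apply, EuclideanSpace.basisFun_repr] at h
      exact h.symm
    calc ∑ i : Fin (n+1), x i * fderiv ℝ u x (EuclideanSpace.single i 1)
        = fderiv ℝ u x (∑ i : Fin (n+1), x i • EuclideanSpace.single i (1:ℝ)) := by
          rw [map_sum]
          exact Finset.sum_congr rfl fun i _ => by
            rw [ContinuousLinearMap.map_smul]; simp [smul_eq_mul]
      _ = fderiv ℝ u x x := by rw [← hx]
  rw [hxx, hdu, Finset.card_univ, Fintype.card_fin, nsmul_eq_mul]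
  push_cast
  field_simp
  ring

lemma stepA {n : ℕ} (R lam : ℝ) (hR : 0 < R) (hlam : 0 < lam)
    (u : EuclideanSpace ℝ (Fin (n+1)) → ℝ) (hreg : ContDiff ℝ 2 u)
    (hbd : ∀ x : EuclideanSpace ℝ (Fin (n+1)), ‖x‖ = R → u x = 0) :
    ∫ x in Metric.closedBall (0 : EuclideanSpace ℝ (Fin (n+1))) R,
        ‖x‖^2 * ((u x)^2 * Real.exp (-‖x‖^2/(4*lam)))
    ≤ (4*lam*(n+1)) * (∫ x in Metric.closedBall (0 : EuclideanSpace ℝ (Fin (n+1))) R,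
          (u x)^2 * Real.exp (-‖x‖^2/(4*lam)))
      + 16*lam^2 * ∫ x in Metric.closedBall (0 : EuclideanSpace ℝ (Fin (n+1))) R,
          ‖fderiv ℝ u x‖^2 * Real.exp (-‖x‖^2/(4*lam)) := by
  have hcont_e : Continuous (fun x : EuclideanSpace ℝ (Fin (n+1)) =>
      Real.exp (-‖x‖^2/(4*lam))) :=
    Real.continuous_exp.comp (((continuous_norm.pow 2).neg).div_const _)
  have hcont_du : Continuous (fun x : EuclideanSpace ℝ (Fin (n+1)) => fderiv ℝ u x x) :=
    (hreg.continuous_fderiv two_ne_zero).clm_apply continuous_id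
  have hcont_ndu : Continuous (fun x : EuclideanSpace ℝ (Fin (n+1)) => ‖fderiv ℝ u x‖) :=
    (hreg.continuous_fderiv two_ne_zero).norm
  have hci : ∀ f : EuclideanSpace ℝ (Fin (n+1)) → ℝ, Continuous f →
      IntegrableOn f (Metric.closedBall (0 : EuclideanSpace ℝ (Fin (n+1))) R) := by
    intro f hf
    exact hf.continuousOn.integrableOn_compact (isCompact_closedBall _ _)
  -- notation
  set B := Metric.closedBall (0 : EuclideanSpace ℝ (Fin (n+1))) R with hB
  have hcg : Continuous (fun x : EuclideanSpace ℝ (Fin (n+1)) =>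
      (u x)^2 * Real.exp (-‖x‖^2/(4*lam))) := ((hreg.continuous).pow 2).mul hcont_e
  -- divergence identity
  have hdiv : ∫ x in B, (∑ i : Fin (n+1), fderiv ℝ
      (fun y => y i * ((u y)^2 * Real.exp (-‖y‖^2/(4*lam)))) x (EuclideanSpace.single i 1)) = 0 := by
    have hFc : ∀ i : Fin (n+1), ContDiff ℝ 1
        (fun y : EuclideanSpace ℝ (Fin (n+1)) => y i * ((u y)^2 * Real.exp (-‖y‖^2/(4*lam)))) := by
      intro i
      have h1 : ContDiff ℝ 1 (fun y : EuclideanSpace ℝ (Fin (n+1)) => y i) := by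
        exact (EuclideanSpace.proj (𝕜 := ℝ) i).contDiff
      have h2 : ContDiff ℝ 1 (fun y : EuclideanSpace ℝ (Fin (n+1)) =>
          Real.exp (-‖y‖^2/(4*lam))) := by
        exact Real.contDiff_exp.comp (((contDiff_norm_sq ℝ).neg).div_const _)
      exact h1.mul (((hreg.of_le one_le_two).pow 2).mul h2)
    have hIk : ∀ i : Fin (n+1), IntegrableOn (fun x => fderiv ℝ
        (fun y => y i * ((u y)^2 * Real.exp (-‖y‖^2/(4*lam)))) x (EuclideanSpace.single i 1)) B := by
      intro i
      exact hci _ (((hFc i).continuous_fderiv one_ne_zero).clm_apply continuous_const)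
    rw [integral_finset_sum _ (fun i _ => hIk i)]
    refine Finset.sum_eq_zero fun i _ => ?_
    refine divergence_ball_zero R hR _ (hFc i) ?_ i
    intro x hx
    rw [hbd x hx]
    ring
  -- rewrite via the pointwise computation
  have hdiv2 : ∫ x in B, (((n+1 : ℝ) - ‖x‖^2/(2*lam)) * ((u x)^2 * Real.exp (-‖x‖^2/(4*lam)))
      + 2 * u x * (fderiv ℝ u x x) * Real.exp (-‖x‖^2/(4*lam))) = 0 := by
    rw [← hdiv]
    exact setIntegral_congr_fun measurableSet_closedBall
      (fun x _ => (pointwise_sum lam hlam u hreg x).symm)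
  have h4 : (0:ℝ) < 4*lam := by linarith
  have hIg : IntegrableOn (fun x => (u x)^2 * Real.exp (-‖x‖^2/(4*lam))) B := hci _ hcg
  have hIA : IntegrableOn (fun x => ‖x‖^2 * ((u x)^2 * Real.exp (-‖x‖^2/(4*lam)))) B :=
    hci _ ((continuous_norm.pow 2).mul hcg)
  have hIJ : IntegrableOn (fun x => u x * fderiv ℝ u x x * Real.exp (-‖x‖^2/(4*lam))) B :=
    hci _ ((hreg.continuous.mul hcont_du).mul hcont_e)
  have hID : IntegrableOn (fun x => ‖fderiv ℝ u x‖^2 * Real.exp (-‖x‖^2/(4*lam))) B :=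
    hci _ ((hcont_ndu.pow 2).mul hcont_e)
  have hI1 : IntegrableOn (fun x => (n+1:ℝ) * ((u x)^2 * Real.exp (-‖x‖^2/(4*lam)))
      + (-(2*lam)⁻¹) * (‖x‖^2 * ((u x)^2 * Real.exp (-‖x‖^2/(4*lam))))) B :=
    (hIg.const_mul _).add (hIA.const_mul _)
  have hI2 : IntegrableOn (fun x => 2 * (u x * fderiv ℝ u x x * Real.exp (-‖x‖^2/(4*lam)))) B :=
    hIJ.const_mul _
  have hlin : ∫ x in B, (((n+1 : ℝ) - ‖x‖^2/(2*lam)) * ((u x)^2 * Real.exp (-‖x‖^2/(4*lam)))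
      + 2 * u x * (fderiv ℝ u x x) * Real.exp (-‖x‖^2/(4*lam)))
      = (n+1:ℝ) * (∫ x in B, (u x)^2 * Real.exp (-‖x‖^2/(4*lam)))
        + (-(2*lam)⁻¹) * (∫ x in B, ‖x‖^2 * ((u x)^2 * Real.exp (-‖x‖^2/(4*lam))))
        + 2 * (∫ x in B, u x * fderiv ℝ u x x * Real.exp (-‖x‖^2/(4*lam))) := by
    have heq : (fun x : EuclideanSpace ℝ (Fin (n+1)) =>
        ((n+1 : ℝ) - ‖x‖^2/(2*lam)) * ((u x)^2 * Real.exp (-‖x‖^2/(4*lam)))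
        + 2 * u x * (fderiv ℝ u x x) * Real.exp (-‖x‖^2/(4*lam)))
        = fun x => ((n+1:ℝ) * ((u x)^2 * Real.exp (-‖x‖^2/(4*lam)))
            + (-(2*lam)⁻¹) * (‖x‖^2 * ((u x)^2 * Real.exp (-‖x‖^2/(4*lam)))))
          + 2 * (u x * fderiv ℝ u x x * Real.exp (-‖x‖^2/(4*lam))) := by
      funext x
      field_simp
      ring
    rw [heq, integral_add hI1 hI2,
      integral_add (hIg.const_mul _) (hIA.const_mul _),
      integral_const_mul, integral_const_mul, integral_const_mul]
  have hpt : ∀ x : EuclideanSpace ℝ (Fin (n+1)),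
      2 * (u x * fderiv ℝ u x x * Real.exp (-‖x‖^2/(4*lam)))
      ≤ (4*lam)⁻¹ * (‖x‖^2 * ((u x)^2 * Real.exp (-‖x‖^2/(4*lam))))
        + 4*lam * (‖fderiv ℝ u x‖^2 * Real.exp (-‖x‖^2/(4*lam))) := by
    intro x
    have hdux : u x * fderiv ℝ u x x ≤ |u x| * (‖fderiv ℝ u x‖ * ‖x‖) := by
      calc u x * fderiv ℝ u x x ≤ |u x * fderiv ℝ u x x| := le_abs_self _
        _ = |u x| * |fderiv ℝ u x x| := abs_mul _ _
        _ ≤ |u x| * (‖fderiv ℝ u x‖ * ‖x‖) := by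
            refine mul_le_mul_of_nonneg_left ?_ (abs_nonneg _)
            rw [← Real.norm_eq_abs]
            exact (fderiv ℝ u x).le_opNorm x
    have hcore : 2 * (u x * fderiv ℝ u x x)
        ≤ (4*lam)⁻¹ * (‖x‖^2 * (u x)^2) + 4*lam * ‖fderiv ℝ u x‖^2 := by
      have h8 : 8*lam*(u x * fderiv ℝ u x x) ≤ ‖x‖^2*(u x)^2 + 16*lam^2*‖fderiv ℝ u x‖^2 := by
        nlinarith [sq_nonneg (|u x| * ‖x‖ - 4*lam * ‖fderiv ℝ u x‖), sq_abs (u x), hlam,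
          mul_le_mul_of_nonneg_left hdux (by linarith : (0:ℝ) ≤ 8*lam)]
      have h9 := mul_le_mul_of_nonneg_left h8 (inv_nonneg.mpr h4.le)
      have hL : (4*lam)⁻¹ * (8*lam*(u x * fderiv ℝ u x x)) = 2 * (u x * fderiv ℝ u x x) := by
        field_simp
        ring
      have hRr : (4*lam)⁻¹ * (‖x‖^2*(u x)^2 + 16*lam^2*‖fderiv ℝ u x‖^2)
          = (4*lam)⁻¹ * (‖x‖^2 * (u x)^2) + 4*lam * ‖fderiv ℝ u x‖^2 := by
        field_simp
        ring
      rw [hL, hRr] at h9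
      exact h9
    have hfin := mul_le_mul_of_nonneg_right hcore (Real.exp_nonneg (-‖x‖^2/(4*lam)))
    calc 2 * (u x * fderiv ℝ u x x * Real.exp (-‖x‖^2/(4*lam)))
        = (2 * (u x * fderiv ℝ u x x)) * Real.exp (-‖x‖^2/(4*lam)) := by ring
      _ ≤ ((4*lam)⁻¹ * (‖x‖^2 * (u x)^2) + 4*lam * ‖fderiv ℝ u x‖^2)
            * Real.exp (-‖x‖^2/(4*lam)) := hfin
      _ = (4*lam)⁻¹ * (‖x‖^2 * ((u x)^2 * Real.exp (-‖x‖^2/(4*lam))))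
            + 4*lam * (‖fderiv ℝ u x‖^2 * Real.exp (-‖x‖^2/(4*lam))) := by ring
  have hJle : 2 * (∫ x in B, u x * fderiv ℝ u x x * Real.exp (-‖x‖^2/(4*lam)))
      ≤ (4*lam)⁻¹ * (∫ x in B, ‖x‖^2 * ((u x)^2 * Real.exp (-‖x‖^2/(4*lam))))
        + 4*lam * (∫ x in B, ‖fderiv ℝ u x‖^2 * Real.exp (-‖x‖^2/(4*lam))) := by
    rw [← integral_const_mul, ← integral_const_mul, ← integral_const_mul,
      ← integral_add (hIA.const_mul _) (hID.const_mul _)]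
    exact setIntegral_mono_on hI2 ((hIA.const_mul _).add (hID.const_mul _))
      measurableSet_closedBall (fun x _ => hpt x)
  rw [hlin] at hdiv2
  have hq : (4*lam)⁻¹ * (∫ x in B, ‖x‖^2 * ((u x)^2 * Real.exp (-‖x‖^2/(4*lam))))
      ≤ (n+1:ℝ) * (∫ x in B, (u x)^2 * Real.exp (-‖x‖^2/(4*lam)))
        + 4*lam * (∫ x in B, ‖fderiv ℝ u x‖^2 * Real.exp (-‖x‖^2/(4*lam))) := by
    have hhalf : (2*lam:ℝ)⁻¹ = (4*lam)⁻¹ + (4*lam)⁻¹ := by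
      field_simp
      ring
    have h1 : (2*lam)⁻¹ * (∫ x in B, ‖x‖^2 * ((u x)^2 * Real.exp (-‖x‖^2/(4*lam))))
        = (n+1:ℝ) * (∫ x in B, (u x)^2 * Real.exp (-‖x‖^2/(4*lam)))
          + 2 * (∫ x in B, u x * fderiv ℝ u x x * Real.exp (-‖x‖^2/(4*lam))) := by
      linarith [hdiv2]
    rw [hhalf] at h1
    linarith [hJle]
  have h2 := mul_le_mul_of_nonneg_left hq h4.le
  rw [← mul_assoc, mul_inv_cancel₀ (ne_of_gt h4), one_mul] at h2
  calc ∫ x in B, ‖x‖^2 * ((u x)^2 * Real.exp (-‖x‖^2/(4*lam)))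
      ≤ 4*lam*((n+1:ℝ) * (∫ x in B, (u x)^2 * Real.exp (-‖x‖^2/(4*lam)))
        + 4*lam * (∫ x in B, ‖fderiv ℝ u x‖^2 * Real.exp (-‖x‖^2/(4*lam)))) := h2
    _ = (4*lam*(n+1)) * (∫ x in B, (u x)^2 * Real.exp (-‖x‖^2/(4*lam)))
        + 16*lam^2 * ∫ x in B, ‖fderiv ℝ u x‖^2 * Real.exp (-‖x‖^2/(4*lam)) := by ring

lemma stmt9_zero {n : ℕ} (R0 lam r mu : ℝ) (hR0 : 0 < R0) (hlam : 0 < lam) (hr : 0 < r)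
    (hrR : r < R0) (hmu : mu ∈ Set.Ioo (0:ℝ) 1)
    (u : EuclideanSpace ℝ (Fin (n+1)) → ℝ) (hreg : ContDiff ℝ 2 u)
    (hbd : ∀ x : EuclideanSpace ℝ (Fin (n+1)), ‖x‖ = R0 → u x = 0)
    (hNf : (16*lam/r^2) * (((n:ℝ)+1)/4
        + lam * ((∫ x in Metric.closedBall (0:EuclideanSpace ℝ (Fin (n+1))) R0,
              ‖fderiv ℝ u x‖^2 * Real.exp (-‖x‖^2/(4*lam)))
            / (∫ x in Metric.closedBall (0:EuclideanSpace ℝ (Fin (n+1))) R0,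
              (u x)^2 * Real.exp (-‖x‖^2/(4*lam))))) ≤ mu) :
    (1 - mu) * (∫ x in Metric.closedBall (0:EuclideanSpace ℝ (Fin (n+1))) R0,
        (u x)^2 * Real.exp (-‖x‖^2/(4*lam)))
    ≤ ∫ x in Metric.closedBall (0:EuclideanSpace ℝ (Fin (n+1))) r,
        (u x)^2 * Real.exp (-‖x‖^2/(4*lam)) := by
  have hcont_e : Continuous (fun x : EuclideanSpace ℝ (Fin (n+1)) =>
      Real.exp (-‖x‖^2/(4*lam))) :=
    Real.continuous_exp.comp (((continuous_norm.pow 2).neg).div_const _)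
  have hcg : Continuous (fun x : EuclideanSpace ℝ (Fin (n+1)) =>
      (u x)^2 * Real.exp (-‖x‖^2/(4*lam))) := ((hreg.continuous).pow 2).mul hcont_e
  have hIgR : IntegrableOn (fun x => (u x)^2 * Real.exp (-‖x‖^2/(4*lam)))
      (Metric.closedBall (0:EuclideanSpace ℝ (Fin (n+1))) R0) :=
    hcg.continuousOn.integrableOn_compact (isCompact_closedBall _ _)
  have hIAR : IntegrableOn (fun x => ‖x‖^2 * ((u x)^2 * Real.exp (-‖x‖^2/(4*lam))))
      (Metric.closedBall (0:EuclideanSpace ℝ (Fin (n+1))) R0) :=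
    (((continuous_norm.pow 2).mul hcg).continuousOn).integrableOn_compact (isCompact_closedBall _ _)
  set I := ∫ x in Metric.closedBall (0:EuclideanSpace ℝ (Fin (n+1))) R0,
      (u x)^2 * Real.exp (-‖x‖^2/(4*lam)) with hI
  set Ir := ∫ x in Metric.closedBall (0:EuclideanSpace ℝ (Fin (n+1))) r,
      (u x)^2 * Real.exp (-‖x‖^2/(4*lam)) with hIr
  set D := ∫ x in Metric.closedBall (0:EuclideanSpace ℝ (Fin (n+1))) R0,
      ‖fderiv ℝ u x‖^2 * Real.exp (-‖x‖^2/(4*lam)) with hD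
  set A := ∫ x in Metric.closedBall (0:EuclideanSpace ℝ (Fin (n+1))) R0,
      ‖x‖^2 * ((u x)^2 * Real.exp (-‖x‖^2/(4*lam))) with hA
  have hInn : 0 ≤ I := setIntegral_nonneg measurableSet_closedBall (fun x _ => by positivity)
  have hIrnn : 0 ≤ Ir := setIntegral_nonneg measurableSet_closedBall (fun x _ => by positivity)
  have hDnn : 0 ≤ D := setIntegral_nonneg measurableSet_closedBall (fun x _ => by positivity)
  have hsub : Metric.closedBall (0:EuclideanSpace ℝ (Fin (n+1))) r
      ⊆ Metric.closedBall (0:EuclideanSpace ℝ (Fin (n+1))) R0 :=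
    Metric.closedBall_subset_closedBall hrR.le
  have hsplit : I = Ir + ∫ x in (Metric.closedBall (0:EuclideanSpace ℝ (Fin (n+1))) R0
      \ Metric.closedBall (0:EuclideanSpace ℝ (Fin (n+1))) r),
      (u x)^2 * Real.exp (-‖x‖^2/(4*lam)) := by
    rw [hI, hIr, ← setIntegral_union Set.disjoint_sdiff_right
      (measurableSet_closedBall.diff measurableSet_closedBall)
      (hIgR.mono_set hsub) (hIgR.mono_set Set.diff_subset),
      Set.union_diff_cancel hsub]
  have hann : (∫ x in (Metric.closedBall (0:EuclideanSpace ℝ (Fin (n+1))) R0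
      \ Metric.closedBall (0:EuclideanSpace ℝ (Fin (n+1))) r),
      (u x)^2 * Real.exp (-‖x‖^2/(4*lam))) ≤ (1/r^2) * A := by
    have hstep1 : (∫ x in (Metric.closedBall (0:EuclideanSpace ℝ (Fin (n+1))) R0
        \ Metric.closedBall (0:EuclideanSpace ℝ (Fin (n+1))) r),
        (u x)^2 * Real.exp (-‖x‖^2/(4*lam)))
        ≤ ∫ x in (Metric.closedBall (0:EuclideanSpace ℝ (Fin (n+1))) R0
        \ Metric.closedBall (0:EuclideanSpace ℝ (Fin (n+1))) r),
        (1/r^2) * (‖x‖^2 * ((u x)^2 * Real.exp (-‖x‖^2/(4*lam)))) := by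
      refine setIntegral_mono_on (hIgR.mono_set Set.diff_subset)
        ((hIAR.mono_set Set.diff_subset).const_mul _)
        (measurableSet_closedBall.diff measurableSet_closedBall) (fun x hx => ?_)
      have hxr : r ≤ ‖x‖ := by
        rcases hx with ⟨-, hx2⟩
        rw [Metric.mem_closedBall, dist_zero_right, not_le] at hx2
        exact hx2.le
      have hr2 : r^2 ≤ ‖x‖^2 := by nlinarith [hr]
      have hg0 : 0 ≤ (u x)^2 * Real.exp (-‖x‖^2/(4*lam)) := by positivity
      have h1 : r^2 * ((u x)^2 * Real.exp (-‖x‖^2/(4*lam)))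
          ≤ ‖x‖^2 * ((u x)^2 * Real.exp (-‖x‖^2/(4*lam))) :=
        mul_le_mul_of_nonneg_right hr2 hg0
      have h2 := mul_le_mul_of_nonneg_left h1 (by positivity : (0:ℝ) ≤ 1/r^2)
      have h3 : (1/r^2) * (r^2 * ((u x)^2 * Real.exp (-‖x‖^2/(4*lam))))
          = (u x)^2 * Real.exp (-‖x‖^2/(4*lam)) := by
        field_simp
      linarith
    have hstep2 : (∫ x in (Metric.closedBall (0:EuclideanSpace ℝ (Fin (n+1))) R0
        \ Metric.closedBall (0:EuclideanSpace ℝ (Fin (n+1))) r),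
        (1/r^2) * (‖x‖^2 * ((u x)^2 * Real.exp (-‖x‖^2/(4*lam))))) ≤ (1/r^2) * A := by
      rw [integral_const_mul]
      refine mul_le_mul_of_nonneg_left ?_ (by positivity : (0:ℝ) ≤ 1/r^2)
      rw [hA]
      refine setIntegral_mono_set hIAR ?_ Set.diff_subset.eventuallyLE
      exact Filter.Eventually.of_forall (fun x => by positivity)
    linarith
  have hstA : A ≤ 4*lam*((n:ℝ)+1) * I + 16*lam^2 * D := by
    have := stepA R0 lam hR0 hlam u hreg hbd
    rw [← hI, ← hD, ← hA] at this
    convert this using 3 <;> push_cast <;> ring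
  rcases eq_or_lt_of_le hInn with hI0 | hIpos
  · have : (1-mu)*I = 0 := by rw [← hI0]; ring
    linarith
  · have hmul := mul_le_mul_of_nonneg_right hNf hInn
    have hexp : (16*lam/r^2) * (((n:ℝ)+1)/4 + lam * (D/I)) * I
        = (1/r^2) * (4*lam*((n:ℝ)+1)*I + 16*lam^2*D) := by
      field_simp
      ring
    rw [hexp] at hmul
    have hfrac : (1/r^2) * A ≤ (1/r^2) * (4*lam*((n:ℝ)+1)*I + 16*lam^2*D) :=
      mul_le_mul_of_nonneg_left hstA (by positivity : (0:ℝ) ≤ 1/r^2)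
    nlinarith [hsplit, hann, hmul, hfrac, hmu.2, hInn]

/-- small frequency at the final time forces concentration in the
small ball (conclusion of Step 3 of Lemma 3.2). -/
theorem stmt9 (N : ℕ) (hN : 1 ≤ N) (R0 lam r mu : ℝ) (hR0 : 0 < R0)
    (hlam : 0 < lam) (hr : 0 < r) (hrR : r < R0) (hmu : mu ∈ Set.Ioo (0:ℝ) 1)
    (x₀ : EuclideanSpace ℝ (Fin N))
    (u : EuclideanSpace ℝ (Fin N) → ℝ) (hreg : ContDiff ℝ 2 u)
    (hbd : ∀ x, ‖x - x₀‖ = R0 → u x = 0)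
    (hNf : (16*lam/r^2) * ((N:ℝ)/4
        + lam * ((∫ x in Metric.closedBall x₀ R0,
              ‖fderiv ℝ u x‖^2 * Real.exp (-‖x - x₀‖^2/(4*lam)))
            / (∫ x in Metric.closedBall x₀ R0,
              (u x)^2 * Real.exp (-‖x - x₀‖^2/(4*lam))))) ≤ mu) :
    (1 - mu) * (∫ x in Metric.closedBall x₀ R0,
        (u x)^2 * Real.exp (-‖x - x₀‖^2/(4*lam)))
    ≤ ∫ x in Metric.closedBall x₀ r,
        (u x)^2 * Real.exp (-‖x - x₀‖^2/(4*lam)) := by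
  obtain ⟨n, rfl⟩ : ∃ n, N = n + 1 := ⟨N - 1, (Nat.succ_pred_eq_of_pos hN).symm⟩
  set u₀ : EuclideanSpace ℝ (Fin (n+1)) → ℝ := fun x => u (x₀ + x) with hu₀
  have hreg₀ : ContDiff ℝ 2 u₀ := hreg.comp (contDiff_const.add contDiff_id)
  have hbd₀ : ∀ x : EuclideanSpace ℝ (Fin (n+1)), ‖x‖ = R0 → u₀ x = 0 := by
    intro x hx
    refine hbd (x₀ + x) ?_
    rw [add_sub_cancel_left]
    exact hx
  have hfd : ∀ x : EuclideanSpace ℝ (Fin (n+1)), fderiv ℝ u₀ x = fderiv ℝ u (x₀ + x) := by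
    intro x
    have h1 : HasFDerivAt (fun y : EuclideanSpace ℝ (Fin (n+1)) => x₀ + y)
        (ContinuousLinearMap.id ℝ _) x := (hasFDerivAt_id x).const_add x₀
    have h2 : HasFDerivAt u (fderiv ℝ u (x₀+x)) (x₀+x) :=
      ((hreg.differentiable two_ne_zero) _).hasFDerivAt
    have h3 := h2.comp x h1
    rw [ContinuousLinearMap.comp_id] at h3
    exact h3.fderiv
  have hIu : ∀ ρ : ℝ, (∫ x in Metric.closedBall x₀ ρ,
        (u x)^2 * Real.exp (-‖x - x₀‖^2/(4*lam)))
      = ∫ x in Metric.closedBall (0:EuclideanSpace ℝ (Fin (n+1))) ρ,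
        (u₀ x)^2 * Real.exp (-‖x‖^2/(4*lam)) := by
    intro ρ
    rw [translate_ball]
    refine setIntegral_congr_fun measurableSet_closedBall (fun x _ => ?_)
    rw [add_sub_cancel_left]
  have hIDu : (∫ x in Metric.closedBall x₀ R0,
        ‖fderiv ℝ u x‖^2 * Real.exp (-‖x - x₀‖^2/(4*lam)))
      = ∫ x in Metric.closedBall (0:EuclideanSpace ℝ (Fin (n+1))) R0,
        ‖fderiv ℝ u₀ x‖^2 * Real.exp (-‖x‖^2/(4*lam)) := by
    rw [translate_ball]
    refine setIntegral_congr_fun measurableSet_closedBall (fun x _ => ?_)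
    rw [add_sub_cancel_left, hfd x]
  rw [hIu R0, hIu r]
  rw [hIu R0, hIDu] at hNf
  push_cast at hNf
  exact stmt9_zero R0 lam r mu hR0 hlam hr hrR hmu u₀ hreg₀ hbd₀ hNf
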